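/- If a hereditary family F of graphs has the strong Erdős–Hajnal property, then F has the polynomial Rödl property. -/

import Mathlib

/-- A family of finite simple graphs, given as a predicate on graphs over every finite
vertex type. -/
abbrev GraphFamily : Type 1 := ∀ (V : Type) [Fintype V], SimpleGraph V → Prop

/-- A family of graphs is hereditary if it is closed under taking induced subgraphs. -/
def Hereditary (F : GraphFamily) : Prop :=
  ∀ (V : Type) [Fintype V] (G : SimpleGraph V), F V G →
    ∀ (s : Set V) [Fintype ↥s], F ↥s (G.induce s)

/-- The bipartite graph between `A` and `B` is complete or empty. -/
def HomogPair {V : Type} (G : SimpleGraph V) (A B : Finset V) : Prop :=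
  (∀ a ∈ A, ∀ b ∈ B, G.Adj a b) ∨ (∀ a ∈ A, ∀ b ∈ B, ¬ G.Adj a b)

/-- The number of (ordered) adjacent pairs between `A` and `B`. -/
noncomputable def crossCount {V : Type} (G : SimpleGraph V) (A B : Finset V) : ℕ :=
  {p : V × V | p.1 ∈ A ∧ p.2 ∈ B ∧ G.Adj p.1 p.2}.ncard

/-- The mighty Erdős–Hajnal property: there is `c > 0` such that for every graph in the family
and all disjoint vertex subsets `A, B` of equal size, there are `A' ⊆ A`, `B' ⊆ B` with
`|A'| ≥ c|A|`, `|B'| ≥ c|B|` that are complete or empty to each other. -/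
def MightyEH (F : GraphFamily) : Prop :=
  ∃ c : ℝ, 0 < c ∧
    ∀ (V : Type) [Fintype V] (G : SimpleGraph V), F V G →
      ∀ A B : Finset V, Disjoint A B → A.card = B.card →
        ∃ A' ⊆ A, ∃ B' ⊆ B,
          c * A.card ≤ (A'.card : ℝ) ∧ c * B.card ≤ (B'.card : ℝ) ∧ HomogPair G A' B'

/-- The homogeneous regularity property: for every `ε > 0` there is `K` such that every graph
in the family has an equipartition into `K` parts such that all but at most `ε K²` pairs of
distinct parts are complete or empty to each other. -/
def HomogReg (F : GraphFamily) : Prop :=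
  ∀ ε : ℝ, 0 < ε → ∃ K : ℕ, 0 < K ∧
    ∀ (V : Type) [Fintype V] (G : SimpleGraph V), F V G →
      ∃ P : Fin K → Finset V,
        (∀ i j, i ≠ j → Disjoint (P i) (P j)) ∧
        (∀ v : V, ∃ i, v ∈ P i) ∧
        (∀ i j, (P i).card ≤ (P j).card + 1) ∧
        ({p : Fin K × Fin K | p.1 ≠ p.2 ∧ ¬ HomogPair G (P p.1) (P p.2)}.ncard : ℝ)
          ≤ ε * K ^ 2

/-- The homogeneous density property: for every `ε > 0` there is `C = C(ε)` such that for every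
graph in the family and disjoint equal-size subsets `A, B` with at least `ε|A||B|` edges between
them, there are `A' ⊆ A`, `B' ⊆ B` of sizes at least `ε^C |A|`, `ε^C |B|` that are complete to
each other. -/
def HomogDensity (F : GraphFamily) : Prop :=
  ∀ ε : ℝ, 0 < ε → ε ≤ 1 → ∃ C : ℝ, 0 < C ∧
    ∀ (V : Type) [Fintype V] (G : SimpleGraph V), F V G →
      ∀ A B : Finset V, Disjoint A B → A.card = B.card →
        ε * A.card * B.card ≤ (crossCount G A B : ℝ) →
        ∃ A' ⊆ A, ∃ B' ⊆ B,
          ε ^ C * A.card ≤ (A'.card : ℝ) ∧ ε ^ C * B.card ≤ (B'.card : ℝ) ∧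
          ∀ a ∈ A', ∀ b ∈ B', G.Adj a b

/-- The family of complements of graphs in `F`. -/
def ComplFamily (F : GraphFamily) : GraphFamily :=
  fun V inst G => @F V inst Gᶜ

/-- The strong Erdős–Hajnal property: there is `ε > 0` such that every graph in the family on
at least 2 vertices has two disjoint vertex subsets, each of size at least `ε n`, that are
complete or empty to each other. -/
def StrongEH (F : GraphFamily) : Prop :=
  ∃ c : ℝ, 0 < c ∧
    ∀ (V : Type) [Fintype V] (G : SimpleGraph V), F V G → 2 ≤ Fintype.card V →
      ∃ A B : Finset V, Disjoint A B ∧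
        c * Fintype.card V ≤ (A.card : ℝ) ∧ c * Fintype.card V ≤ (B.card : ℝ) ∧
        HomogPair G A B

/-- The induced subgraph on `s` is `ε`-homogeneous: its edge density is at most `ε` or at
least `1 - ε` (densities measured via ordered adjacent pairs over `|s|(|s|-1)`). -/
def EpsHomogOn {V : Type} (G : SimpleGraph V) (s : Finset V) (ε : ℝ) : Prop :=
  ({p : V × V | p.1 ∈ s ∧ p.2 ∈ s ∧ G.Adj p.1 p.2}.ncard : ℝ) ≤ ε * s.card * (s.card - 1) ∨
  (1 - ε) * s.card * (s.card - 1) ≤ ({p : V × V | p.1 ∈ s ∧ p.2 ∈ s ∧ G.Adj p.1 p.2}.ncard : ℝ)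

/-- The polynomial Rödl property: there is a constant `C` such that for every `ε ∈ (0,1)`,
every graph in the family has an induced subgraph on at least `ε^C n` vertices that is
`ε`-homogeneous. -/
def PolyRodl (F : GraphFamily) : Prop :=
  ∃ C : ℝ, 0 < C ∧
    ∀ ε : ℝ, 0 < ε → ε < 1 →
      ∀ (V : Type) [Fintype V] (G : SimpleGraph V), F V G →
        ∃ s : Finset V, ε ^ C * Fintype.card V ≤ (s.card : ℝ) ∧ EpsHomogOn G s ε

set_option maxHeartbeats 1000000

section SEHAux

attribute [local instance] Classical.propDecidable

open Finset

variable {V : Type} [DecidableEq V]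


attribute [local instance] Classical.propDecidable

open Finset

variable {V : Type} [DecidableEq V]

/-- membership in the fold-union of a list of finsets -/
theorem SEH_mem_foldr_union (L : List (Finset V)) (a : V) :
    a ∈ L.foldr (· ∪ ·) ∅ ↔ ∃ A ∈ L, a ∈ A := by
  induction L with
  | nil => simp
  | cons X T ih => simp [List.foldr_cons, Finset.mem_union, ih]

/-- number of ordered `r`-pairs in a finset of pairs -/
noncomputable def SEH_cnt (r : V → V → Prop) (s : Finset (V × V)) : ℕ :=
  (s.filter fun p => r p.1 p.2).card

/-- counting lemma: a union of `L.length` pairwise disjoint, pairwise `r`-anticomplete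
sets each of size `s` has `L.length * s` elements and at most `L.length * (s*s - s)`
ordered `r`-pairs among distinct elements. -/
theorem SEH_count_union (r : V → V → Prop) (hsym : ∀ a b, r a b → r b a) (s : ℕ) :
    ∀ L : List (Finset V),
      L.Pairwise (fun X Y => Disjoint X Y ∧ ∀ a ∈ X, ∀ b ∈ Y, ¬ r a b) →
      (∀ A ∈ L, A.card = s) →
      (L.foldr (· ∪ ·) ∅).card = L.length * s ∧
      SEH_cnt r (L.foldr (· ∪ ·) ∅).offDiag
        ≤ L.length * (s * s - s) := by
  intro L
  induction L with
  | nil => intro _ _; simp [SEH_cnt]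
  | cons X T ih =>
    intro hp hc
    simp only [SEH_cnt] at ih ⊢
    rw [List.pairwise_cons] at hp
    obtain ⟨ih1, ih2⟩ := ih hp.2 (fun A hA => hc A (List.mem_cons_of_mem _ hA))
    have hcX : X.card = s := hc X (List.mem_cons_self)
    set U' : Finset V := T.foldr (· ∪ ·) ∅ with hU'
    have hdisj : Disjoint X U' := by
      rw [Finset.disjoint_left]
      intro a haX haU
      obtain ⟨A, hAT, haA⟩ := (SEH_mem_foldr_union T a).mp haU
      exact (Finset.disjoint_left.mp (hp.1 A hAT).1) haX haA
    constructor
    · show (X ∪ U').card = _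
      rw [Finset.card_union_of_disjoint hdisj, hcX, ih1]
      simp [List.length_cons]; ring
    · have hsub : (((X ∪ U').offDiag.filter fun p => r p.1 p.2) : Finset (V × V)) ⊆
          ((X.offDiag.filter fun p => r p.1 p.2) ∪ (U'.offDiag.filter fun p => r p.1 p.2)) := by
        intro p hp'
        simp only [Finset.mem_filter, Finset.mem_offDiag, Finset.mem_union] at hp' ⊢
        obtain ⟨⟨h1, h2, hne⟩, hr⟩ := hp'
        rcases h1 with h1 | h1 <;> rcases h2 with h2 | h2
        · exact Or.inl ⟨⟨h1, h2, hne⟩, hr⟩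
        · exfalso
          obtain ⟨A, hAT, h2A⟩ := (SEH_mem_foldr_union T _).mp h2
          exact (hp.1 A hAT).2 _ h1 _ h2A hr
        · exfalso
          obtain ⟨A, hAT, h1A⟩ := (SEH_mem_foldr_union T _).mp h1
          exact (hp.1 A hAT).2 _ h2 _ h1A (hsym _ _ hr)
        · exact Or.inr ⟨⟨h1, h2, hne⟩, hr⟩
      have hXbound : ((X.offDiag.filter fun p => r p.1 p.2)).card ≤ s * s - s := by
        calc ((X.offDiag.filter fun p => r p.1 p.2)).card ≤ X.offDiag.card :=
              Finset.card_filter_le _ _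
          _ = s * s - s := by rw [Finset.offDiag_card, hcX]
      calc (((X ∪ U').offDiag.filter fun p => r p.1 p.2) : Finset (V × V)).card
          ≤ ((X.offDiag.filter fun p => r p.1 p.2) ∪
              (U'.offDiag.filter fun p => r p.1 p.2)).card := Finset.card_le_card hsub
        _ ≤ ((X.offDiag.filter fun p => r p.1 p.2)).card +
              ((U'.offDiag.filter fun p => r p.1 p.2)).card := Finset.card_union_le _ _
        _ ≤ (s * s - s) + T.length * (s * s - s) := Nat.add_le_add hXbound ih2
        _ = (X :: T).length * (s * s - s) := by simp [List.length_cons]; ring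

/-- trimming a list of finsets to equal size -/
theorem SEH_exists_trim (s : ℕ) :
    ∀ L : List (Finset V), (∀ A ∈ L, s ≤ A.card) →
      ∃ L' : List (Finset V), L'.length = L.length ∧
        List.Forall₂ (· ⊆ ·) L' L ∧ ∀ A ∈ L', A.card = s := by
  intro L
  induction L with
  | nil => intro _; exact ⟨[], rfl, List.Forall₂.nil, by simp⟩
  | cons X T ih =>
    intro hL
    obtain ⟨L', h1, h2, h3⟩ := ih (fun A hA => hL A (List.mem_cons_of_mem _ hA))
    obtain ⟨Y, hYsub, hYcard⟩ := Finset.exists_subset_card_eq (hL X (List.mem_cons_self))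
    refine ⟨Y :: L', by simp [h1], List.Forall₂.cons hYsub h2, ?_⟩
    intro A hA
    rcases List.mem_cons.mp hA with rfl | hA
    · exact hYcard
    · exact h3 A hA

theorem SEH_forall₂_mem {α : Type} {rr : α → α → Prop} :
    ∀ {L' L : List α}, List.Forall₂ rr L' L → ∀ {a}, a ∈ L' → ∃ b ∈ L, rr a b := by
  intro L' L h
  induction h with
  | nil => intro a ha; simp at ha
  | cons hab _ ih =>
    intro x hx
    rcases List.mem_cons.mp hx with rfl | hx
    · exact ⟨_, List.mem_cons_self, hab⟩
    · obtain ⟨b, hb, hrb⟩ := ih hx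
      exact ⟨b, List.mem_cons_of_mem _ hb, hrb⟩

theorem SEH_pairwise_of_forall₂ {R : Finset V → Finset V → Prop}
    (hmono : ∀ {X Y X' Y' : Finset V}, X' ⊆ X → Y' ⊆ Y → R X Y → R X' Y') :
    ∀ {L' L : List (Finset V)}, List.Forall₂ (· ⊆ ·) L' L → L.Pairwise R → L'.Pairwise R := by
  intro L' L h
  induction h with
  | nil => intro _; exact List.Pairwise.nil
  | @cons a b l₁ l₂ hab htail ih =>
    intro hp
    rw [List.pairwise_cons] at hp ⊢
    refine ⟨?_, ih hp.2⟩
    intro y' hy'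
    obtain ⟨y, hy, hsub⟩ := SEH_forall₂_mem htail hy'
    exact hmono hab hsub (hp.1 y hy)

/-- the set of ordered adjacent pairs over a finset, as a filtered offDiag -/
theorem SEH_ncard_eq (G : SimpleGraph V) (U : Finset V) :
    ({p : V × V | p.1 ∈ U ∧ p.2 ∈ U ∧ G.Adj p.1 p.2}).ncard
      = SEH_cnt G.Adj U.offDiag := by
  simp only [SEH_cnt]
  rw [← Set.ncard_coe_finset]
  congr 1
  ext ⟨a, b⟩
  simp only [Finset.coe_filter, Set.mem_setOf_eq, Finset.mem_offDiag]
  constructor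
  · rintro ⟨h1, h2, h3⟩; exact ⟨⟨h1, h2, h3.ne⟩, h3⟩
  · rintro ⟨⟨h1, h2, _⟩, h3⟩; exact ⟨h1, h2, h3⟩

theorem SEH_le_mul_self (m : ℕ) : m ≤ m * m := by
  cases m with
  | zero => simp
  | succ k => exact Nat.le_mul_of_pos_left _ (Nat.succ_pos k)

theorem SEH_filter_split (r : V → V → Prop) (s : Finset (V × V)) :
    SEH_cnt r s + SEH_cnt (fun a b => ¬ r a b) s = s.card := by
  simp only [SEH_cnt]
  exact Finset.card_filter_add_card_filter_not (s := s) (fun p : V × V => r p.1 p.2)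

theorem SEH_arith (ε : ℝ) (M s : ℕ) (hεM : 1 ≤ ε * M) (hε0 : 0 ≤ ε) (hε1 : ε ≤ 1)
    (hs : 1 ≤ s) :
    ((M * (s * s - s) : ℕ) : ℝ) ≤ ε * ((M * s : ℕ) : ℝ) * (((M * s : ℕ) : ℝ) - 1) := by
  have hss : s ≤ s * s := Nat.le_mul_of_pos_left s (by omega)
  push_cast [Nat.cast_sub hss]
  have hM0 : (0 : ℝ) ≤ (M : ℝ) := Nat.cast_nonneg M
  have hs0 : (0 : ℝ) ≤ (s : ℝ) := Nat.cast_nonneg s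
  have h1 : (0 : ℝ) ≤ (ε * M - 1) * s := mul_nonneg (by linarith) hs0
  nlinarith [mul_nonneg (mul_nonneg (mul_nonneg hM0 hs0) hs0) (sub_nonneg.mpr hεM),
    mul_nonneg (mul_nonneg hM0 hs0) (sub_nonneg.mpr hε1),
    mul_nonneg (mul_nonneg hM0 hs0) h1]



theorem SEH_tree (G : SimpleGraph V) (c : ℝ) (hc0 : 0 < c) (hc1 : c ≤ 1)
    (hEH : ∀ S : Finset V, 2 ≤ S.card → ∃ A B : Finset V, A ⊆ S ∧ B ⊆ S ∧ Disjoint A B ∧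
      (c * S.card ≤ (A.card : ℝ)) ∧ (c * S.card ≤ (B.card : ℝ)) ∧ HomogPair G A B) :
    ∀ (h : ℕ) (S : Finset V), (2 : ℝ) ≤ c ^ h * S.card →
      ∃ LE LC : List (Finset V),
        2 ^ h ≤ LE.length * LC.length ∧
        (∀ A ∈ LE, A ⊆ S ∧ c ^ h * S.card ≤ (A.card : ℝ)) ∧
        (∀ A ∈ LC, A ⊆ S ∧ c ^ h * S.card ≤ (A.card : ℝ)) ∧
        LE.Pairwise (fun X Y => Disjoint X Y ∧ ∀ a ∈ X, ∀ b ∈ Y, ¬ G.Adj a b) ∧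
        LC.Pairwise (fun X Y => Disjoint X Y ∧ ∀ a ∈ X, ∀ b ∈ Y, G.Adj a b) := by
  intro h
  induction h with
  | zero =>
    intro S hS
    refine ⟨[S], [S], by simp, ?_, ?_, by simp, by simp⟩ <;>
    · intro A hA
      rcases List.mem_singleton.mp hA with rfl
      exact ⟨Finset.Subset.refl _, by simpa using le_refl _⟩
  | succ h ih =>
    intro S hS
    have hpow1 : c ^ (h + 1) ≤ 1 := pow_le_one₀ hc0.le hc1
    have hS2 : 2 ≤ S.card := by
      have : (2 : ℝ) ≤ (S.card : ℝ) := by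
        calc (2 : ℝ) ≤ c ^ (h+1) * S.card := hS
          _ ≤ 1 * S.card := by
              apply mul_le_mul_of_nonneg_right hpow1 (Nat.cast_nonneg _)
          _ = S.card := one_mul _
      exact_mod_cast this
    obtain ⟨A, B, hAS, hBS, hABd, hcA, hcB, hpair⟩ := hEH S hS2
    have hch : (0:ℝ) ≤ c ^ h := pow_nonneg hc0.le h
    have hcApow : c ^ (h+1) * S.card ≤ c ^ h * A.card := by
      calc c ^ (h+1) * (S.card : ℝ) = c ^ h * (c * S.card) := by ring
        _ ≤ c ^ h * A.card := mul_le_mul_of_nonneg_left hcA hch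
    have hcBpow : c ^ (h+1) * S.card ≤ c ^ h * B.card := by
      calc c ^ (h+1) * (S.card : ℝ) = c ^ h * (c * S.card) := by ring
        _ ≤ c ^ h * B.card := mul_le_mul_of_nonneg_left hcB hch
    obtain ⟨LEa, LCa, hlena, hmemEa, hmemCa, hpEa, hpCa⟩ := ih A (le_trans hS hcApow)
    obtain ⟨LEb, LCb, hlenb, hmemEb, hmemCb, hpEb, hpCb⟩ := ih B (le_trans hS hcBpow)
    have hmemEa' : ∀ A' ∈ LEa, A' ⊆ S ∧ c ^ (h+1) * S.card ≤ (A'.card : ℝ) :=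
      fun A' hA' => ⟨(hmemEa A' hA').1.trans hAS, le_trans hcApow (hmemEa A' hA').2⟩
    have hmemEb' : ∀ A' ∈ LEb, A' ⊆ S ∧ c ^ (h+1) * S.card ≤ (A'.card : ℝ) :=
      fun A' hA' => ⟨(hmemEb A' hA').1.trans hBS, le_trans hcBpow (hmemEb A' hA').2⟩
    have hmemCa' : ∀ A' ∈ LCa, A' ⊆ S ∧ c ^ (h+1) * S.card ≤ (A'.card : ℝ) :=
      fun A' hA' => ⟨(hmemCa A' hA').1.trans hAS, le_trans hcApow (hmemCa A' hA').2⟩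
    have hmemCb' : ∀ A' ∈ LCb, A' ⊆ S ∧ c ^ (h+1) * S.card ≤ (A'.card : ℝ) :=
      fun A' hA' => ⟨(hmemCb A' hA').1.trans hBS, le_trans hcBpow (hmemCb A' hA').2⟩
    rcases hpair with hcomp | hemp
    · -- complete pair : concatenate the complete lists, take the longer empty list
      have hcross : ∀ X ∈ LCa, ∀ Y ∈ LCb, Disjoint X Y ∧ ∀ a ∈ X, ∀ b ∈ Y, G.Adj a b := by
        intro X hX Y hY
        refine ⟨Finset.disjoint_of_subset_left (hmemCa X hX).1
          (Finset.disjoint_of_subset_right (hmemCb Y hY).1 hABd), ?_⟩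
        intro a ha b hb
        exact hcomp a ((hmemCa X hX).1 ha) b ((hmemCb Y hY).1 hb)
      have hpC : (LCa ++ LCb).Pairwise
          (fun X Y => Disjoint X Y ∧ ∀ a ∈ X, ∀ b ∈ Y, G.Adj a b) :=
        List.pairwise_append.mpr ⟨hpCa, hpCb, hcross⟩
      have hmemC : ∀ A' ∈ LCa ++ LCb, A' ⊆ S ∧ c ^ (h+1) * S.card ≤ (A'.card : ℝ) := by
        intro A' hA'
        rcases List.mem_append.mp hA' with hA' | hA'
        · exact hmemCa' A' hA'
        · exact hmemCb' A' hA'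
      rcases le_total LEa.length LEb.length with hle | hle
      · refine ⟨LEb, LCa ++ LCb, ?_, hmemEb', hmemC, hpEb, hpC⟩
        rw [List.length_append, Nat.mul_add]
        have h1 : LEa.length * LCa.length ≤ LEb.length * LCa.length :=
          Nat.mul_le_mul_right _ hle
        calc 2 ^ (h+1) = 2 ^ h + 2 ^ h := by ring
          _ ≤ LEa.length * LCa.length + LEb.length * LCb.length := Nat.add_le_add hlena hlenb
          _ ≤ LEb.length * LCa.length + LEb.length * LCb.length := Nat.add_le_add_right h1 _
      · refine ⟨LEa, LCa ++ LCb, ?_, hmemEa', hmemC, hpEa, hpC⟩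
        rw [List.length_append, Nat.mul_add]
        have h1 : LEb.length * LCb.length ≤ LEa.length * LCb.length :=
          Nat.mul_le_mul_right _ hle
        calc 2 ^ (h+1) = 2 ^ h + 2 ^ h := by ring
          _ ≤ LEa.length * LCa.length + LEb.length * LCb.length := Nat.add_le_add hlena hlenb
          _ ≤ LEa.length * LCa.length + LEa.length * LCb.length := Nat.add_le_add_left h1 _
    · -- empty pair
      have hcross : ∀ X ∈ LEa, ∀ Y ∈ LEb, Disjoint X Y ∧ ∀ a ∈ X, ∀ b ∈ Y, ¬ G.Adj a b := by
        intro X hX Y hY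
        refine ⟨Finset.disjoint_of_subset_left (hmemEa X hX).1
          (Finset.disjoint_of_subset_right (hmemEb Y hY).1 hABd), ?_⟩
        intro a ha b hb
        exact hemp a ((hmemEa X hX).1 ha) b ((hmemEb Y hY).1 hb)
      have hpE : (LEa ++ LEb).Pairwise
          (fun X Y => Disjoint X Y ∧ ∀ a ∈ X, ∀ b ∈ Y, ¬ G.Adj a b) :=
        List.pairwise_append.mpr ⟨hpEa, hpEb, hcross⟩
      have hmemE : ∀ A' ∈ LEa ++ LEb, A' ⊆ S ∧ c ^ (h+1) * S.card ≤ (A'.card : ℝ) := by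
        intro A' hA'
        rcases List.mem_append.mp hA' with hA' | hA'
        · exact hmemEa' A' hA'
        · exact hmemEb' A' hA'
      rcases le_total LCa.length LCb.length with hle | hle
      · refine ⟨LEa ++ LEb, LCb, ?_, hmemE, hmemCb', hpE, hpCb⟩
        rw [List.length_append, Nat.add_mul]
        have h1 : LEa.length * LCa.length ≤ LEa.length * LCb.length :=
          Nat.mul_le_mul_left _ hle
        calc 2 ^ (h+1) = 2 ^ h + 2 ^ h := by ring
          _ ≤ LEa.length * LCa.length + LEb.length * LCb.length := Nat.add_le_add hlena hlenb
          _ ≤ LEa.length * LCb.length + LEb.length * LCb.length := Nat.add_le_add_right h1 _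
      · refine ⟨LEa ++ LEb, LCa, ?_, hmemE, hmemCa', hpE, hpCa⟩
        rw [List.length_append, Nat.add_mul]
        have h1 : LEb.length * LCb.length ≤ LEb.length * LCa.length :=
          Nat.mul_le_mul_left _ hle
        calc 2 ^ (h+1) = 2 ^ h + 2 ^ h := by ring
          _ ≤ LEa.length * LCa.length + LEb.length * LCb.length := Nat.add_le_add hlena hlenb
          _ ≤ LEa.length * LCa.length + LEb.length * LCa.length := Nat.add_le_add_left h1 _

theorem SEH_key1 (ε : ℝ) (hε0 : 0 < ε) : ε⁻¹ ≤ (2 : ℝ) ^ (⌈Real.logb 2 ε⁻¹⌉₊ : ℕ) := by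
  have h1 : ε⁻¹ = (2 : ℝ) ^ (Real.logb 2 ε⁻¹) :=
    (Real.rpow_logb (by norm_num) (by norm_num) (inv_pos.mpr hε0)).symm
  conv_lhs => rw [h1]
  rw [← Real.rpow_natCast (2:ℝ) (⌈Real.logb 2 ε⁻¹⌉₊)]
  apply Real.rpow_le_rpow_left_iff (by norm_num : (1:ℝ) < 2) |>.mpr
  exact Nat.le_ceil _

theorem SEH_key3 (c ε : ℝ) (hc0 : 0 < c) (hc : c ≤ 1/2) (hε0 : 0 < ε) (hε : ε ≤ 1/2) :
    2 * ε ^ (4 * Real.logb 2 c⁻¹ + 1) ≤ c ^ (2 * ⌈Real.logb 2 ε⁻¹⌉₊) := by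
  set L := Real.logb 2 c⁻¹ with hLdef
  set E := Real.logb 2 ε⁻¹ with hEdef
  set t : ℕ := ⌈E⌉₊ with htdef
  have hlog2 : (0:ℝ) < Real.log 2 := Real.log_pos (by norm_num)
  have h2c : (2:ℝ) ≤ c⁻¹ := by
    rw [show (2:ℝ) = (1/2 : ℝ)⁻¹ by norm_num]
    gcongr
  have h2e : (2:ℝ) ≤ ε⁻¹ := by
    rw [show (2:ℝ) = (1/2 : ℝ)⁻¹ by norm_num]
    gcongr
  have hL1 : 1 ≤ L := by
    rw [hLdef, Real.logb, le_div_iff₀ hlog2, one_mul]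
    exact Real.log_le_log (by norm_num) h2c
  have hE1 : 1 ≤ E := by
    rw [hEdef, Real.logb, le_div_iff₀ hlog2, one_mul]
    exact Real.log_le_log (by norm_num) h2e
  have hlogε : Real.log ε = -(E * Real.log 2) := by
    rw [hEdef, Real.logb, div_mul_cancel₀ _ hlog2.ne', Real.log_inv]
    ring
  have hlogc : Real.log c = -(L * Real.log 2) := by
    rw [hLdef, Real.logb, div_mul_cancel₀ _ hlog2.ne', Real.log_inv]
    ring
  have ht2 : (t : ℝ) < E + 1 := Nat.ceil_lt_add_one (by linarith)
  have hrw1 : (c : ℝ) ^ (2 * t) = Real.exp (Real.log c * (2 * (t:ℝ))) := by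
    rw [← Real.rpow_natCast c (2*t), Real.rpow_def_of_pos hc0]
    push_cast
    ring_nf
  have hrw2 : ε ^ (4 * L + 1) = Real.exp (Real.log ε * (4 * L + 1)) :=
    Real.rpow_def_of_pos hε0 _
  calc 2 * ε ^ (4 * L + 1) = Real.exp (Real.log 2 + Real.log ε * (4 * L + 1)) := by
        rw [hrw2, Real.exp_add, Real.exp_log (by norm_num : (0:ℝ) < 2)]
    _ ≤ Real.exp (Real.log c * (2 * (t:ℝ))) := by
        apply Real.exp_le_exp.mpr
        rw [hlogε, hlogc]
        have hfact : (0:ℝ) ≤ (E - 1) * (2 * L + 1) := by nlinarith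
        nlinarith [mul_le_mul_of_nonneg_left ht2.le
            (mul_nonneg (by linarith : (0:ℝ) ≤ L) hlog2.le),
          mul_le_mul_of_nonneg_left hfact hlog2.le]
    _ = c ^ (2 * t) := hrw1.symm


/-- If a hereditary family of graphs has the strong Erdős–Hajnal property, then it has the
polynomial Rödl property. -/
theorem stmt10 (F : GraphFamily) (hF : Hereditary F) (h : StrongEH F) : PolyRodl F := by
  classical
  obtain ⟨c₀, hc₀, hSEH⟩ := h
  set c : ℝ := min c₀ (1/2) with hcdef
  have hc0 : 0 < c := lt_min hc₀ (by norm_num)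
  have hc2 : c ≤ 1/2 := min_le_right _ _
  have hc1 : c ≤ 1 := hc2.trans (by norm_num)
  set L : ℝ := Real.logb 2 c⁻¹ with hLdef
  have hlog2 : (0:ℝ) < Real.log 2 := Real.log_pos (by norm_num)
  have hL1 : (1:ℝ) ≤ L := by
    have h2c : (2:ℝ) ≤ c⁻¹ := by
      rw [show (2:ℝ) = (1/2 : ℝ)⁻¹ by norm_num]
      gcongr
    rw [hLdef, Real.logb, le_div_iff₀ hlog2, one_mul]
    exact Real.log_le_log (by norm_num) h2c
  refine ⟨4 * L + 1, by linarith, ?_⟩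
  intro ε hε0 hε1 V iV G hG
  set n : ℕ := Fintype.card V with hn
  by_cases hεhalf : ε ≤ 1/2
  · -- main case : ε ≤ 1/2
    have hEH : ∀ S : Finset V, 2 ≤ S.card → ∃ A B : Finset V, A ⊆ S ∧ B ⊆ S ∧
        Disjoint A B ∧ (c * S.card ≤ (A.card : ℝ)) ∧ (c * S.card ≤ (B.card : ℝ)) ∧
        HomogPair G A B := by
      intro S hS
      have hcardS : Fintype.card ↥(↑S : Set V) = S.card := by simp
      have hFs := hF V G hG (↑S : Set V)
      obtain ⟨A, B, hd, hA, hB, hp⟩ := hSEH ↥(↑S : Set V) (G.induce (↑S : Set V)) hFs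
        (by rw [hcardS]; exact hS)
      rw [hcardS] at hA hB
      have hcw : ∀ m : ℕ, c * (m : ℝ) ≤ c₀ * (m : ℝ) :=
        fun m => mul_le_mul_of_nonneg_right (min_le_left _ _) (Nat.cast_nonneg _)
      refine ⟨A.map (Function.Embedding.subtype _), B.map (Function.Embedding.subtype _),
        ?_, ?_, ?_, ?_, ?_, ?_⟩
      · intro x hx
        obtain ⟨a, ha, rfl⟩ := Finset.mem_map.mp hx
        exact a.2
      · intro x hx
        obtain ⟨a, ha, rfl⟩ := Finset.mem_map.mp hx
        exact a.2
      · exact (Finset.disjoint_map _).mpr hd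
      · rw [Finset.card_map]; exact le_trans (hcw S.card) hA
      · rw [Finset.card_map]; exact le_trans (hcw S.card) hB
      · rcases hp with hp | hp
        · left
          intro x hx y hy
          obtain ⟨a, ha, rfl⟩ := Finset.mem_map.mp hx
          obtain ⟨b, hb, rfl⟩ := Finset.mem_map.mp hy
          have := hp a ha b hb
          simpa using this
        · right
          intro x hx y hy
          obtain ⟨a, ha, rfl⟩ := Finset.mem_map.mp hx
          obtain ⟨b, hb, rfl⟩ := Finset.mem_map.mp hy
          have := hp a ha b hb
          simpa using this
    set t : ℕ := ⌈Real.logb 2 ε⁻¹⌉₊ with htdef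
    have KEY1 : ε⁻¹ ≤ (2:ℝ) ^ t := SEH_key1 ε hε0
    have KEY3 : 2 * ε ^ (4 * L + 1) ≤ c ^ (2 * t) := SEH_key3 c ε hc0 hc2 hε0 hεhalf
    have hεC0 : (0:ℝ) ≤ ε ^ (4 * L + 1) := Real.rpow_nonneg hε0.le _
    by_cases hbig : (2:ℝ) ≤ c ^ (2 * t) * (n : ℝ)
    · -- build the Ramsey tree
      obtain ⟨LE, LC, hlen, hmemE, hmemC, hpE, hpC⟩ := SEH_tree G c hc0 hc1 hEH (2*t)
        Finset.univ (by rw [Finset.card_univ]; exact hbig)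
      set s : ℕ := ⌈c ^ (2*t) * (n : ℝ)⌉₊ with hsdef
      have hs1 : 1 ≤ s := Nat.ceil_pos.mpr (by linarith)
      set M : ℕ := 2 ^ t with hMdef
      have hM : M ≤ LE.length ∨ M ≤ LC.length := by
        by_contra hcon
        push_neg at hcon
        have h1 : LE.length * LC.length < M * M := Nat.mul_lt_mul'' hcon.1 hcon.2
        rw [two_mul, pow_add] at hlen
        exact absurd (lt_of_le_of_lt hlen h1) (lt_irrefl _)
      -- shared numeric facts
      have hMr : (ε⁻¹ : ℝ) ≤ ((M : ℕ) : ℝ) := by rw [hMdef]; push_cast; exact KEY1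
      have hsr : (c:ℝ) ^ (2*t) * (n : ℝ) ≤ (s : ℝ) := Nat.le_ceil _
      have hεM : 1 ≤ ε * (M : ℝ) := by
        calc (1:ℝ) = ε * ε⁻¹ := (mul_inv_cancel₀ hε0.ne').symm
          _ ≤ ε * M := mul_le_mul_of_nonneg_left hMr hε0.le
      have harith := SEH_arith ε M s hεM hε0.le (by linarith) hs1
      have hsize : ε ^ (4 * L + 1) * (n : ℝ) ≤ ((M : ℕ) : ℝ) * ((s : ℕ) : ℝ) := by
        have h2 : ε * ε ^ (4 * L + 1) ≤ c ^ (2*t) := by nlinarith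
        calc ε ^ (4*L+1) * (n:ℝ) = ε⁻¹ * (ε * ε ^ (4*L+1) * (n:ℝ)) := by
              field_simp
          _ ≤ ε⁻¹ * (c ^ (2*t) * (n:ℝ)) := by
              apply mul_le_mul_of_nonneg_left ?_ (inv_nonneg.mpr hε0.le)
              exact mul_le_mul_of_nonneg_right h2 (Nat.cast_nonneg _)
          _ ≤ ((M:ℕ):ℝ) * ((s:ℕ):ℝ) := by
              apply mul_le_mul hMr hsr (by positivity) (Nat.cast_nonneg _)
      rcases hM with hM | hM
      · -- sparse outcome
        set L1 := LE.take M with hL1def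
        have hlen1 : L1.length = M := by rw [hL1def, List.length_take, min_eq_left hM]
        have hmem1 : ∀ A ∈ L1, s ≤ A.card := by
          intro A hA
          have h2 := (hmemE A (List.mem_of_mem_take hA)).2
          rw [Finset.card_univ] at h2
          exact Nat.ceil_le.mpr h2
        have hp1 : L1.Pairwise (fun X Y => Disjoint X Y ∧ ∀ a ∈ X, ∀ b ∈ Y, ¬ G.Adj a b) :=
          hpE.sublist (List.take_sublist _ _)
        obtain ⟨L', hlen', hf2, hcard'⟩ := SEH_exists_trim s L1 hmem1
        have hp' : L'.Pairwise (fun X Y => Disjoint X Y ∧ ∀ a ∈ X, ∀ b ∈ Y, ¬ G.Adj a b) := by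
          apply SEH_pairwise_of_forall₂ ?_ hf2 hp1
          intro X Y X' Y' hX hY hR
          exact ⟨hR.1.mono hX hY, fun a ha b hb => hR.2 a (hX ha) b (hY hb)⟩
        obtain ⟨hUcard, hUcount⟩ :=
          SEH_count_union G.Adj (fun a b hab => hab.symm) s L' hp' hcard'
        rw [hlen', hlen1] at hUcard hUcount
        set U := L'.foldr (· ∪ ·) ∅ with hUdef
        refine ⟨U, ?_, ?_⟩
        · rw [hUcard]
          push_cast
          push_cast at hsize
          exact hsize
        · unfold EpsHomogOn
          left
          rw [SEH_ncard_eq G U]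
          have hUc : (U.card : ℝ) = ((M * s : ℕ) : ℝ) := by rw [hUcard]
          calc ((SEH_cnt G.Adj U.offDiag : ℕ) : ℝ)
              ≤ ((M * (s * s - s) : ℕ) : ℝ) := Nat.cast_le.mpr hUcount
            _ ≤ ε * ((M * s : ℕ) : ℝ) * (((M * s : ℕ) : ℝ) - 1) := harith
            _ = ε * (U.card : ℝ) * ((U.card : ℝ) - 1) := by rw [hUc]
      · -- dense outcome
        set L1 := LC.take M with hL1def
        have hlen1 : L1.length = M := by rw [hL1def, List.length_take, min_eq_left hM]
        have hmem1 : ∀ A ∈ L1, s ≤ A.card := by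
          intro A hA
          have h2 := (hmemC A (List.mem_of_mem_take hA)).2
          rw [Finset.card_univ] at h2
          exact Nat.ceil_le.mpr h2
        have hp1 : L1.Pairwise (fun X Y => Disjoint X Y ∧ ∀ a ∈ X, ∀ b ∈ Y, G.Adj a b) :=
          hpC.sublist (List.take_sublist _ _)
        obtain ⟨L', hlen', hf2, hcard'⟩ := SEH_exists_trim s L1 hmem1
        have hp' : L'.Pairwise (fun X Y => Disjoint X Y ∧ ∀ a ∈ X, ∀ b ∈ Y, G.Adj a b) := by
          apply SEH_pairwise_of_forall₂ ?_ hf2 hp1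
          intro X Y X' Y' hX hY hR
          exact ⟨hR.1.mono hX hY, fun a ha b hb => hR.2 a (hX ha) b (hY hb)⟩
        have hp'' : L'.Pairwise
            (fun X Y => Disjoint X Y ∧ ∀ a ∈ X, ∀ b ∈ Y, ¬ (¬ G.Adj a b)) :=
          hp'.imp (fun hR => ⟨hR.1, fun a ha b hb hneg => hneg (hR.2 a ha b hb)⟩)
        obtain ⟨hUcard, hUcount⟩ := SEH_count_union (fun a b => ¬ G.Adj a b)
          (fun a b hab h2 => hab h2.symm) s L' hp'' hcard'
        rw [hlen', hlen1] at hUcard hUcount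
        set U := L'.foldr (· ∪ ·) ∅ with hUdef
        refine ⟨U, ?_, ?_⟩
        · rw [hUcard]
          push_cast
          push_cast at hsize
          exact hsize
        · unfold EpsHomogOn
          right
          rw [SEH_ncard_eq G U]
          have hsplit : SEH_cnt G.Adj U.offDiag +
              SEH_cnt (fun a b => ¬ G.Adj a b) U.offDiag = U.offDiag.card :=
            SEH_filter_split G.Adj U.offDiag
          have hoff : U.offDiag.card = U.card * U.card - U.card := Finset.offDiag_card _
          have hcc : U.card ≤ U.card * U.card := SEH_le_mul_self _
          have hoffR : ((U.offDiag.card : ℕ) : ℝ) = (U.card : ℝ) * (U.card : ℝ) - (U.card : ℝ) := by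
            rw [hoff, Nat.cast_sub hcc]; push_cast; ring
          have hsplitR : ((SEH_cnt G.Adj U.offDiag : ℕ) : ℝ) +
              ((SEH_cnt (fun a b => ¬ G.Adj a b) U.offDiag : ℕ) : ℝ) =
              (U.card : ℝ) * (U.card : ℝ) - (U.card : ℝ) := by
            rw [← hoffR]; exact_mod_cast congrArg (Nat.cast : ℕ → ℝ) hsplit
          have hnc := (Nat.cast_le (α := ℝ)).mpr hUcount
          have hUc : (U.card : ℝ) = ((M * s : ℕ) : ℝ) := by rw [hUcard]
          rw [hUc] at hsplitR ⊢
          nlinarith [harith, hnc, hsplitR]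
    · -- too few vertices : a single vertex (or the empty set) works
      have hn2 : c ^ (2*t) * (n : ℝ) < 2 := not_le.mp hbig
      have hεC1 : ε ^ (4 * L + 1) * (n : ℝ) ≤ 1 := by
        have h1 : 2 * ε ^ (4*L+1) * (n:ℝ) ≤ c ^ (2*t) * (n:ℝ) :=
          mul_le_mul_of_nonneg_right KEY3 (Nat.cast_nonneg _)
        nlinarith
      rcases Nat.eq_zero_or_pos n with hn0 | hn0
      · refine ⟨∅, ?_, ?_⟩
        · rw [hn0]
          simp
        · unfold EpsHomogOn
          left
          have hset : {p : V × V | p.1 ∈ (∅ : Finset V) ∧ p.2 ∈ (∅ : Finset V) ∧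
              G.Adj p.1 p.2} = ∅ := by
            ext p; simp
          rw [hset]
          simp
      · obtain ⟨v⟩ := Fintype.card_pos_iff.mp hn0
        refine ⟨{v}, ?_, ?_⟩
        · rw [Finset.card_singleton]
          exact_mod_cast hεC1
        · unfold EpsHomogOn
          left
          have hset : {p : V × V | p.1 ∈ ({v} : Finset V) ∧ p.2 ∈ ({v} : Finset V) ∧
              G.Adj p.1 p.2} = ∅ := by
            ext p
            simp only [Finset.mem_singleton, Set.mem_setOf_eq, Set.mem_empty_iff_false,
              iff_false]
            rintro ⟨h1, h2, hadj⟩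
            rw [h1, h2] at hadj
            exact G.loopless.irrefl _ hadj
          rw [hset]
          simp
  · -- ε > 1/2 : the whole vertex set works
    push_neg at hεhalf
    refine ⟨Finset.univ, ?_, ?_⟩
    · rw [Finset.card_univ, ← hn]
      have h1 : ε ^ (4*L+1) ≤ 1 := Real.rpow_le_one hε0.le hε1.le (by linarith)
      calc ε ^ (4*L+1) * (n:ℝ) ≤ 1 * (n:ℝ) :=
            mul_le_mul_of_nonneg_right h1 (Nat.cast_nonneg _)
        _ = (n:ℝ) := one_mul _
    · unfold EpsHomogOn
      have hco : (0:ℝ) ≤ ((Finset.univ : Finset V).card : ℝ) *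
          (((Finset.univ : Finset V).card : ℝ) - 1) := by
        rcases Nat.eq_zero_or_pos (Finset.univ : Finset V).card with h0 | h0
        · rw [h0]; simp
        · have : (1:ℝ) ≤ ((Finset.univ : Finset V).card : ℝ) := Nat.one_le_cast.mpr h0
          nlinarith
      have hb : (({p : V × V | p.1 ∈ (Finset.univ : Finset V) ∧
          p.2 ∈ (Finset.univ : Finset V) ∧ G.Adj p.1 p.2}).ncard : ℝ) ≤
          ((Finset.univ : Finset V).card : ℝ) * (((Finset.univ : Finset V).card : ℝ) - 1) := by
        rw [SEH_ncard_eq G Finset.univ]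
        have h1 : ((Finset.univ : Finset V).offDiag.filter fun p => G.Adj p.1 p.2).card
            ≤ (Finset.univ : Finset V).offDiag.card := Finset.card_filter_le _ _
        have h2 : ((Finset.univ : Finset V).offDiag.card : ℝ) =
            ((Finset.univ : Finset V).card : ℝ) * (((Finset.univ : Finset V).card : ℝ) - 1) := by
          rw [Finset.offDiag_card, Nat.cast_sub (SEH_le_mul_self _)]
          push_cast; ring
        calc (((Finset.univ : Finset V).offDiag.filter fun p => G.Adj p.1 p.2).card : ℝ)
            ≤ ((Finset.univ : Finset V).offDiag.card : ℝ) := Nat.cast_le.mpr h1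
          _ = _ := h2
      by_cases hle : (({p : V × V | p.1 ∈ (Finset.univ : Finset V) ∧
          p.2 ∈ (Finset.univ : Finset V) ∧ G.Adj p.1 p.2}).ncard : ℝ) ≤
          ε * ((Finset.univ : Finset V).card : ℝ) * (((Finset.univ : Finset V).card : ℝ) - 1)
      · exact Or.inl hle
      · right
        push_neg at hle
        nlinarith

end SEHAux
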